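/- Let G be a connected graph, H a connected graph with at least 2 vertices, u, v vertices of G, and w a vertex of H. Let G_1 (resp. G_2) be obtained by identifying w with u (resp. with v). If D_G(v) ≥ D_G(u), then W(G_2) ≥ W(G_1), with equality if and only if D_G(v) = D_G(u). -/

import Mathlib

open Finset SimpleGraph

/-- The sum of distances from `u` to all vertices of `G`. -/
noncomputable def distSum {V : Type*} [Fintype V] (G : SimpleGraph V) (u : V) : ℕ :=
  ∑ v, G.dist u v

/-- The Wiener index of `G`: the sum of distances over all unordered pairs of vertices. -/
noncomputable def wienerIndex {V : Type*} [Fintype V] (G : SimpleGraph V) : ℕ :=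
  (∑ u : V, ∑ v : V, G.dist u v) / 2

/-- The graph obtained from G and H by identifying the vertex w of H with the vertex u
of G (disjoint union with w merged into u). -/
def glue {V W : Type*} (G : SimpleGraph V) (u : V) (H : SimpleGraph W) (w : W) :
    SimpleGraph (V ⊕ {x : W // x ≠ w}) :=
  SimpleGraph.fromRel (fun x y =>
    match x, y with
    | Sum.inl a, Sum.inl b => G.Adj a b
    | Sum.inr a, Sum.inr b => H.Adj a.1 b.1
    | Sum.inl a, Sum.inr b => a = u ∧ H.Adj w b.1
    | Sum.inr _, Sum.inl _ => False)

section Aux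

variable {V W : Type*} {G : SimpleGraph V} {H : SimpleGraph W} {u : V} {w : W}

/-- Embedding of `G` into the glued graph. -/
def glueHomG (G : SimpleGraph V) (u : V) (H : SimpleGraph W) (w : W) :
    G →g glue G u H w where
  toFun := Sum.inl
  map_rel' := by
    intro a b h
    rw [glue, SimpleGraph.fromRel_adj]
    exact ⟨by simpa using h.ne, Or.inl h⟩

/-- The map from `W` into the glued vertex set. -/
def glueMapH (u : V) (w : W) [DecidableEq W] : W → V ⊕ {x : W // x ≠ w} :=
  fun x => if h : x = w then Sum.inl u else Sum.inr ⟨x, h⟩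

lemma glueMapH_self [DecidableEq W] : glueMapH (W := W) u w w = Sum.inl u :=
  dif_pos rfl

lemma glueMapH_ne [DecidableEq W] {x : W} (h : x ≠ w) :
    glueMapH (V := V) u w x = Sum.inr ⟨x, h⟩ := dif_neg h

/-- Embedding of `H` into the glued graph. -/
def glueHomH (G : SimpleGraph V) (u : V) (H : SimpleGraph W) (w : W) [DecidableEq W] :
    H →g glue G u H w where
  toFun := glueMapH u w
  map_rel' := by
    intro a b h
    rw [glue, SimpleGraph.fromRel_adj]
    by_cases ha : a = w <;> by_cases hb : b = w
    · exact absurd (ha.trans hb.symm) h.ne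
    · subst ha
      rw [glueMapH_self, glueMapH_ne hb]
      exact ⟨by simp, Or.inl ⟨rfl, h⟩⟩
    · subst hb
      rw [glueMapH_self, glueMapH_ne ha]
      exact ⟨by simp, Or.inr ⟨rfl, h.symm⟩⟩
    · rw [glueMapH_ne ha, glueMapH_ne hb]
      exact ⟨by simp [Subtype.ext_iff, h.ne], Or.inl h⟩

/-- projection to the `G` part -/
def projG (u : V) : V ⊕ {x : W // x ≠ w} → V := Sum.elim id (fun _ => u)

/-- projection to the `H` part -/
def projH (w : W) : V ⊕ {x : W // x ≠ w} → W := Sum.elim (fun _ => w) Subtype.val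

lemma adj_dist_le_one {a b : V} (h : G.Adj a b) : G.dist a b ≤ 1 :=
  SimpleGraph.dist_le (SimpleGraph.Walk.cons h SimpleGraph.Walk.nil)

/-- The key lower-bound lemma: any walk in the glued graph has length at least the sum of
the distances of its projections. -/
lemma glue_adj_inl_inl {a b : V} (h : (glue G u H w).Adj (Sum.inl a) (Sum.inl b)) :
    G.Adj a b := by
  rw [glue, SimpleGraph.fromRel_adj] at h
  rcases h with ⟨-, h | h⟩
  · exact h
  · exact h.symm

lemma glue_adj_inr_inr {a b : {x : W // x ≠ w}} (h : (glue G u H w).Adj (Sum.inr a) (Sum.inr b)) :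
    H.Adj a.1 b.1 := by
  rw [glue, SimpleGraph.fromRel_adj] at h
  rcases h with ⟨-, h | h⟩
  · exact h
  · exact h.symm

lemma glue_adj_inl_inr {a : V} {b : {x : W // x ≠ w}}
    (h : (glue G u H w).Adj (Sum.inl a) (Sum.inr b)) : a = u ∧ H.Adj w b.1 := by
  rw [glue, SimpleGraph.fromRel_adj] at h
  rcases h with ⟨-, h | h⟩
  · exact h
  · exact h.elim

lemma glue_adj_inr_inl {a : V} {b : {x : W // x ≠ w}}
    (h : (glue G u H w).Adj (Sum.inr b) (Sum.inl a)) : a = u ∧ H.Adj w b.1 :=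
  glue_adj_inl_inr h.symm

/-- The key lower-bound lemma: any walk in the glued graph has length at least the sum of
the distances of its projections. -/
lemma glue_walk_lower (hG : G.Connected) (hH : H.Connected)
    {x y : V ⊕ {x : W // x ≠ w}} (p : (glue G u H w).Walk x y) :
    G.dist (projG u x) (projG u y) + H.dist (projH w x) (projH w y) ≤ p.length := by
  induction p with
  | nil => simp [SimpleGraph.dist_self]
  | @cons x z y h q ih =>
    rw [SimpleGraph.Walk.length_cons]
    cases x with
    | inl a =>
      cases z with
      | inl b =>
        have hab := glue_adj_inl_inl h
        have t1 : G.dist a (projG u y) ≤ G.dist a b + G.dist b (projG u y) :=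
          hG.dist_triangle
        have t2 := adj_dist_le_one hab
        simp only [projG, projH, Sum.elim_inl, id] at t1 ih ⊢
        omega
      | inr b =>
        obtain ⟨rfl, hwb⟩ := glue_adj_inl_inr h
        have t1 : H.dist w (projH w y) ≤ H.dist w b.1 + H.dist b.1 (projH w y) :=
          hH.dist_triangle
        have t2 := adj_dist_le_one hwb
        simp only [projG, projH, Sum.elim_inl, Sum.elim_inr, id] at t1 ih ⊢
        omega
    | inr a =>
      cases z with
      | inl b =>
        obtain ⟨rfl, hwa⟩ := glue_adj_inr_inl h
        have t1 : H.dist a.1 (projH w y) ≤ H.dist a.1 w + H.dist w (projH w y) :=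
          hH.dist_triangle
        have t2 := adj_dist_le_one hwa.symm
        simp only [projG, projH, Sum.elim_inl, Sum.elim_inr, id] at t1 ih ⊢
        omega
      | inr b =>
        have hab := glue_adj_inr_inr h
        have t1 : H.dist a.1 (projH w y) ≤ H.dist a.1 b.1 + H.dist b.1 (projH w y) :=
          hH.dist_triangle
        have t2 := adj_dist_le_one hab
        simp only [projG, projH, Sum.elim_inr] at t1 ih ⊢
        omega

variable [DecidableEq W]

lemma glue_dist_inl_inl (hG : G.Connected) (hH : H.Connected) (a b : V) :
    (glue G u H w).dist (Sum.inl a) (Sum.inl b) = G.dist a b := by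
  obtain ⟨p, hp⟩ := hG.exists_walk_length_eq_dist a b
  apply le_antisymm
  · calc (glue G u H w).dist (Sum.inl a) (Sum.inl b)
        ≤ (p.map (glueHomG G u H w)).length := SimpleGraph.dist_le _
      _ = G.dist a b := by rw [SimpleGraph.Walk.length_map, hp]
  · have hr : (glue G u H w).Reachable (Sum.inl a) (Sum.inl b) :=
      ⟨p.map (glueHomG G u H w)⟩
    obtain ⟨q, hq⟩ := hr.exists_walk_length_eq_dist
    have := glue_walk_lower (u := u) hG hH q
    simp only [projG, projH, Sum.elim_inl, id, SimpleGraph.dist_self] at this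
    omega

lemma glue_dist_inr_inr (hG : G.Connected) (hH : H.Connected) (a b : {x : W // x ≠ w}) :
    (glue G u H w).dist (Sum.inr a) (Sum.inr b) = H.dist a.1 b.1 := by
  obtain ⟨p, hp⟩ := hH.exists_walk_length_eq_dist a.1 b.1
  have ha : glueMapH (V := V) u w a.1 = Sum.inr a := glueMapH_ne a.2
  have hb : glueMapH (V := V) u w b.1 = Sum.inr b := glueMapH_ne b.2
  apply le_antisymm
  · calc (glue G u H w).dist (Sum.inr a) (Sum.inr b)
        ≤ ((p.map (glueHomH G u H w)).copy ha hb).length := SimpleGraph.dist_le _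
      _ = H.dist a.1 b.1 := by
          erw [SimpleGraph.Walk.length_copy, SimpleGraph.Walk.length_map, hp]
  · have hr : (glue G u H w).Reachable (Sum.inr a) (Sum.inr b) :=
      ⟨(p.map (glueHomH G u H w)).copy ha hb⟩
    obtain ⟨q, hq⟩ := hr.exists_walk_length_eq_dist
    have := glue_walk_lower (u := u) hG hH q
    simp only [projG, projH, Sum.elim_inr, SimpleGraph.dist_self] at this
    omega

lemma glue_dist_inl_inr (hG : G.Connected) (hH : H.Connected)
    (a : V) (b : {x : W // x ≠ w}) :
    (glue G u H w).dist (Sum.inl a) (Sum.inr b) = G.dist a u + H.dist w b.1 := by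
  obtain ⟨p, hp⟩ := hG.exists_walk_length_eq_dist a u
  obtain ⟨q, hq⟩ := hH.exists_walk_length_eq_dist w b.1
  have hw : glueMapH (V := V) u w w = Sum.inl u := glueMapH_self
  have hb : glueMapH (V := V) u w b.1 = Sum.inr b := glueMapH_ne b.2
  have hle := SimpleGraph.dist_le
    ((p.map (glueHomG G u H w)).append ((q.map (glueHomH G u H w)).copy hw hb))
  erw [SimpleGraph.Walk.length_append, SimpleGraph.Walk.length_copy,
    SimpleGraph.Walk.length_map, SimpleGraph.Walk.length_map, hp, hq] at hle
  apply le_antisymm hle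
  have hr : (glue G u H w).Reachable (Sum.inl a) (Sum.inr b) :=
    ⟨(p.map (glueHomG G u H w)).append ((q.map (glueHomH G u H w)).copy hw hb)⟩
  obtain ⟨s, hs⟩ := hr.exists_walk_length_eq_dist
  calc G.dist a u + H.dist w b.1 ≤ s.length := by
        have := glue_walk_lower (u := u) hG hH s
        simp only [projG, projH, Sum.elim_inl, Sum.elim_inr, id] at this
        omega
    _ = _ := hs

lemma glue_dist_inr_inl (hG : G.Connected) (hH : H.Connected)
    (a : V) (b : {x : W // x ≠ w}) :
    (glue G u H w).dist (Sum.inr b) (Sum.inl a) = G.dist a u + H.dist w b.1 := by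
  rw [SimpleGraph.dist_comm, glue_dist_inl_inr hG hH]

end Aux

section Sum

variable {V W : Type*} [Fintype V] [Fintype W] [DecidableEq W]
  {G : SimpleGraph V} {H : SimpleGraph W} {w : W}

lemma glue_total (hG : G.Connected) (hH : H.Connected) (u : V) :
    (∑ x, ∑ y, (glue G u H w).dist x y) =
      ((∑ a, ∑ b, G.dist a b) + (∑ a : {x : W // x ≠ w}, ∑ b : {x : W // x ≠ w}, H.dist a.1 b.1)
        + 2 * Fintype.card V * (∑ b : {x : W // x ≠ w}, H.dist w b.1))
      + 2 * Fintype.card {x : W // x ≠ w} * distSum G u := by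
  have hT : (∑ x, ∑ y, (glue G u H w).dist x y)
      = (∑ a : V, ((∑ b : V, (glue G u H w).dist (Sum.inl a) (Sum.inl b))
          + ∑ b : {x : W // x ≠ w}, (glue G u H w).dist (Sum.inl a) (Sum.inr b)))
        + ∑ a : {x : W // x ≠ w}, ((∑ b : V, (glue G u H w).dist (Sum.inr a) (Sum.inl b))
          + ∑ b : {x : W // x ≠ w}, (glue G u H w).dist (Sum.inr a) (Sum.inr b)) := by
    rw [Fintype.sum_sum_type]
    congr 1 <;> exact Finset.sum_congr rfl fun _ _ => Fintype.sum_sum_type _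
  rw [hT]
  simp only [glue_dist_inl_inl hG hH, glue_dist_inr_inr hG hH, glue_dist_inl_inr hG hH,
    glue_dist_inr_inl hG hH]
  have hDu : (∑ a : V, G.dist a u) = distSum G u := by
    rw [distSum]; exact Finset.sum_congr rfl fun a _ => SimpleGraph.dist_comm
  simp only [Finset.sum_add_distrib, Finset.sum_const, Finset.card_univ, smul_eq_mul,
    ← Finset.mul_sum, hDu]
  ring
end Sum

/-- Identifying a vertex w of H with a vertex of G of smaller distance-sum gives a graph
of smaller Wiener index, with equality iff the distance sums agree. -/
theorem stmt7 {V W : Type*} [Fintype V] [Fintype W] [DecidableEq W]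
    (G : SimpleGraph V) (hG : G.Connected) (H : SimpleGraph W) (hH : H.Connected)
    (hW : 2 ≤ Fintype.card W) (u v : V) (w : W)
    (hD : distSum G u ≤ distSum G v) :
    wienerIndex (glue G u H w) ≤ wienerIndex (glue G v H w) ∧
      (wienerIndex (glue G u H w) = wienerIndex (glue G v H w) ↔
        distSum G u = distSum G v) := by
  obtain ⟨x, hx⟩ := Fintype.exists_ne_of_one_lt_card (by omega) w
  have hpos : 0 < Fintype.card {x : W // x ≠ w} := Fintype.card_pos_iff.mpr ⟨⟨x, hx⟩⟩
  set C := (∑ a, ∑ b, G.dist a b)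
      + (∑ a : {x : W // x ≠ w}, ∑ b : {x : W // x ≠ w}, H.dist a.1 b.1)
      + 2 * Fintype.card V * (∑ b : {x : W // x ≠ w}, H.dist w b.1) with hC
  set m := Fintype.card {x : W // x ≠ w} with hm
  have hdi : ∀ t : V, wienerIndex (glue G t H w) = C / 2 + m * distSum G t := by
    intro t
    rw [wienerIndex, glue_total hG hH t, ← hC, ← hm]
    have h2 : 2 * m * distSum G t = (m * distSum G t) * 2 := by ring
    rw [h2, Nat.add_mul_div_right _ _ two_pos]
  rw [hdi u, hdi v]
  constructor
  · exact Nat.add_le_add_left (Nat.mul_le_mul_left m hD) _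
  · constructor
    · intro h
      have := Nat.add_left_cancel h
      exact Nat.eq_of_mul_eq_mul_left hpos this
    · intro h
      rw [h]
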